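/- For 1 < p < 2 there is a constant c_p > 0, depending only on p, such that for all vectors a, b in ℝ^N, not both zero, one has ⟨|b|^{p−2} b − |a|^{p−2} a, b − a⟩ ≥ c_p |b − a|^2 (|a| + |b|)^{p−2}. -/

import Mathlib

open Real

/-- `x ^ q * x = x ^ (q+1)` for `0 ≤ x`, provided both exponents are nonzero. -/
private lemma rpow_mul_self (x q : ℝ) (hx : 0 ≤ x) (hq : q ≠ 0) (hq1 : q + 1 ≠ 0) :
    x ^ q * x = x ^ (q + 1) := by
  rcases eq_or_lt_of_le hx with h | h
  · rw [← h, Real.zero_rpow hq, Real.zero_rpow hq1, zero_mul]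
  · rw [Real.rpow_add_one (ne_of_gt h)]

/-- Concavity tangent bound: for `0 ≤ s ≤ t` and `0 < q < 1`,
`t^q - s^q ≥ q * t^(q-1) * (t - s)`. -/
private lemma concave_tangent {q s t : ℝ} (hq0 : 0 < q) (hq1 : q < 1)
    (hs : 0 ≤ s) (hst : s ≤ t) :
    q * t ^ (q - 1) * (t - s) ≤ t ^ q - s ^ q := by
  rcases eq_or_lt_of_le (hs.trans hst) with h | ht
  · have hs0 : s = 0 := le_antisymm (hst.trans h.symm.le) hs
    rw [← h, hs0, Real.zero_rpow (by linarith : q - 1 ≠ 0),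
      Real.zero_rpow (ne_of_gt hq0)]
    norm_num
  · -- t > 0; apply Bernoulli with `1 + x = s / t`
    have hx : (-1 : ℝ) ≤ s / t - 1 := by
      have : 0 ≤ s / t := div_nonneg hs ht.le
      linarith
    have hB := rpow_one_add_le_one_add_mul_self hx hq0.le hq1.le
    rw [add_sub_cancel] at hB
    -- (s/t)^q ≤ 1 + q*(s/t - 1); multiply by t^q > 0
    have htq : (0:ℝ) < t ^ q := Real.rpow_pos_of_pos ht q
    have hmul : (s / t) ^ q * t ^ q = s ^ q := by
      rw [Real.div_rpow hs ht.le, div_mul_cancel₀]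
      exact ne_of_gt htq
    have h2 : s ^ q ≤ (1 + q * (s / t - 1)) * t ^ q := by
      rw [← hmul]
      exact mul_le_mul_of_nonneg_right hB htq.le
    have htq1 : t ^ q = t ^ (q - 1) * t := by
      rw [rpow_mul_self t (q - 1) ht.le (by linarith) (by simpa using ne_of_gt hq0)]
      ring_nf
    have hd : q * (s / t - 1) * t = q * (s - t) := by
      field_simp
    have h3 : q * (s / t - 1) * t ^ q = q * (s - t) * t ^ (q - 1) := by
      rw [htq1]
      linear_combination t ^ (q - 1) * hd
    nlinarith [h3, h2]

/-- `(s + t) ^ (p-2) ≤ s ^ (p-2) + t ^ (p-2)` for `0 ≤ s`, `0 ≤ t`, `0 < s + t`, `p < 2`. -/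
private lemma sum_rpow_le {p s t : ℝ} (hp2 : p < 2) (hs : 0 ≤ s) (ht : 0 ≤ t)
    (hst : 0 < s + t) : (s + t) ^ (p - 2) ≤ s ^ (p - 2) + t ^ (p - 2) := by
  rcases le_total s t with h | h
  · have ht0 : 0 < t := by linarith
    have h1 : (s + t) ^ (p - 2) ≤ t ^ (p - 2) :=
      Real.rpow_le_rpow_of_nonpos ht0 (by linarith) (by linarith)
    have h2 : (0:ℝ) ≤ s ^ (p - 2) := Real.rpow_nonneg hs _
    linarith
  · have hs0 : 0 < s := by linarith
    have h1 : (s + t) ^ (p - 2) ≤ s ^ (p - 2) :=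
      Real.rpow_le_rpow_of_nonpos hs0 (by linarith) (by linarith)
    have h2 : (0:ℝ) ≤ t ^ (p - 2) := Real.rpow_nonneg ht _
    linarith

/-- Inequality (B): `(t^(p-1) - s^(p-1)) * (t - s) ≥ c (t-s)^2 (s+t)^(p-2)`
with `c = (p-1)/2`, for `s, t ≥ 0`, `s + t > 0`. -/
private lemma ineq_B {p s t : ℝ} (hp1 : 1 < p) (hp2 : p < 2) (hs : 0 ≤ s) (ht : 0 ≤ t)
    (hst : 0 < s + t) :
    (p - 1) / 2 * (t - s) ^ 2 * (s + t) ^ (p - 2) ≤ (t ^ (p - 1) - s ^ (p - 1)) * (t - s) := by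
  have key : ∀ s t : ℝ, 0 ≤ s → s ≤ t → 0 < s + t →
      (p - 1) / 2 * (t - s) ^ 2 * (s + t) ^ (p - 2) ≤ (t ^ (p - 1) - s ^ (p - 1)) * (t - s) := by
    intro s t hs hst hpos
    have ht0 : 0 < t := by rcases lt_or_ge 0 t with h | h; exact h; linarith
    have htan := concave_tangent (by linarith : (0:ℝ) < p - 1) (by linarith : p - 1 < 1) hs hst
    have hmono : (s + t) ^ (p - 2) ≤ t ^ (p - 1 - 1) := by
      rw [show p - 1 - 1 = p - 2 by ring]
      exact Real.rpow_le_rpow_of_nonpos ht0 (by linarith) (by linarith)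
    have hts : 0 ≤ t - s := by linarith
    have hpow : (0:ℝ) ≤ (s + t) ^ (p - 2) := Real.rpow_nonneg hpos.le _
    have hpow2 : (0:ℝ) ≤ t ^ (p - 1 - 1) := Real.rpow_nonneg ht0.le _
    have s1 := mul_le_mul_of_nonneg_left hmono
      (mul_nonneg (by linarith : (0:ℝ) ≤ (p - 1) / 2) (sq_nonneg (t - s)))
    have s2 := mul_le_mul_of_nonneg_right htan hts
    nlinarith [s1, s2, sq_nonneg (t - s), mul_nonneg (sq_nonneg (t - s)) hpow2]
  rcases le_total s t with h | h
  · exact key s t hs h hst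
  · have := key t s ht h (by linarith)
    have e2 : (s - t) ^ 2 = (t - s) ^ 2 := by ring
    have e3 : t + s = s + t := by ring
    rw [e2, e3, show (s ^ (p - 1) - t ^ (p - 1)) * (s - t) =
      (t ^ (p - 1) - s ^ (p - 1)) * (t - s) by ring] at this
    exact this
  
/-- The main scalar inequality. -/
private lemma scalar_key {p : ℝ} (hp1 : 1 < p) (hp2 : p < 2) {s t u : ℝ}
    (hs : 0 ≤ s) (ht : 0 ≤ t) (hst : 0 < s + t) (hu : u ≤ s * t) :
    (p - 1) / 2 * (s ^ 2 + t ^ 2 - 2 * u) * (s + t) ^ (p - 2) ≤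
      t ^ (p - 2) * t ^ 2 + s ^ (p - 2) * s ^ 2 - (s ^ (p - 2) + t ^ (p - 2)) * u := by
  have hp20 : p - 2 ≠ 0 := by linarith
  have hp10 : p - 1 ≠ 0 := by linarith
  have es : s ^ (p - 2) * s = s ^ (p - 1) := by
    rw [rpow_mul_self s (p - 2) hs hp20 (by rw [show p - 2 + 1 = p - 1 by ring]; exact hp10),
      show p - 2 + 1 = p - 1 by ring]
  have et : t ^ (p - 2) * t = t ^ (p - 1) := by
    rw [rpow_mul_self t (p - 2) ht hp20 (by rw [show p - 2 + 1 = p - 1 by ring]; exact hp10),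
      show p - 2 + 1 = p - 1 by ring]
  -- decomposition of LHS of inner product
  have hdecomp : t ^ (p - 2) * t ^ 2 + s ^ (p - 2) * s ^ 2 - (s ^ (p - 2) + t ^ (p - 2)) * u =
      (t ^ (p - 1) - s ^ (p - 1)) * (t - s) + (s ^ (p - 2) + t ^ (p - 2)) * (s * t - u) := by
    have h1 : t ^ (p - 1) * t = t ^ (p - 2) * t ^ 2 := by rw [← et]; ring
    have h2 : s ^ (p - 1) * s = s ^ (p - 2) * s ^ 2 := by rw [← es]; ring
    nlinarith [es, et, h1, h2]
  rw [hdecomp]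
  have hB := ineq_B hp1 hp2 hs ht hst
  -- inequality (A)
  have hA : (p - 1) * (s + t) ^ (p - 2) * (s * t - u) ≤
      (s ^ (p - 2) + t ^ (p - 2)) * (s * t - u) := by
    apply mul_le_mul_of_nonneg_right _ (by linarith)
    have h1 := sum_rpow_le hp2 hs ht hst
    have h2 : (0:ℝ) ≤ (s + t) ^ (p - 2) := Real.rpow_nonneg hst.le _
    nlinarith
  nlinarith [hA, hB]

theorem stmt_4 (p : ℝ) (hp1 : 1 < p) (hp2 : p < 2) :
    ∃ c : ℝ, 0 < c ∧ ∀ (N : ℕ), 1 ≤ N → ∀ a b : EuclideanSpace ℝ (Fin N), (a ≠ 0 ∨ b ≠ 0) →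
      (inner ℝ ((‖b‖ ^ (p - 2)) • b - (‖a‖ ^ (p - 2)) • a) (b - a) : ℝ) ≥
        c * ‖b - a‖ ^ (2:ℝ) * (‖a‖ + ‖b‖) ^ (p - 2) := by
  refine ⟨(p - 1) / 2, by linarith, ?_⟩
  intro N _ a b hab
  set s : ℝ := ‖a‖ with hsdef
  set t : ℝ := ‖b‖ with htdef
  have hs : 0 ≤ s := norm_nonneg a
  have ht : 0 ≤ t := norm_nonneg b
  have hst : 0 < s + t := by
    rcases hab with h | h
    · have : 0 < s := norm_pos_iff.mpr h
      linarith
    · have : 0 < t := norm_pos_iff.mpr h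
      linarith
  have hu : (inner ℝ a b : ℝ) ≤ s * t := real_inner_le_norm a b
  have hinner : (inner ℝ ((‖b‖ ^ (p - 2)) • b - (‖a‖ ^ (p - 2)) • a) (b - a) : ℝ) =
      t ^ (p - 2) * t ^ 2 + s ^ (p - 2) * s ^ 2 - (s ^ (p - 2) + t ^ (p - 2)) * (inner ℝ a b : ℝ) := by
    rw [inner_sub_left, inner_sub_right, inner_sub_right, real_inner_smul_left,
      real_inner_smul_left, real_inner_smul_left, real_inner_smul_left,
      real_inner_self_eq_norm_sq, real_inner_self_eq_norm_sq,
      real_inner_comm b a]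
    ring
  have hnorm : ‖b - a‖ ^ (2:ℝ) = s ^ 2 + t ^ 2 - 2 * (inner ℝ a b : ℝ) := by
    rw [show ((2:ℝ) = ((2:ℕ):ℝ)) by norm_num, Real.rpow_natCast]
    rw [norm_sub_sq_real, real_inner_comm b a]
    ring
  rw [hinner, hnorm, ge_iff_le]
  exact scalar_key hp1 hp2 hs ht hst hu
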